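/- Let $F: \mathbb{R}^n \to \mathbb{R}$ be differentiable and $(L_0, L_1)$-smooth, i.e., for all $x, x'$ with $\|x - x'\| \le 1/L_1$ it holds that $\|\nabla F(x) - \nabla F(x')\| \le (L_0 + L_1\|\nabla F(x)\|)\|x - x'\|$. Then for all $x, x'$ with $\|x - x'\| \le 1/L_1$, $F(x') \le F(x) + \nabla F(x)^T(x' - x) + \tfrac{1}{2}(L_0 + L_1\|\nabla F(x)\|)\|x' - x\|^2$. -/

import Mathlib

open scoped RealInnerProductSpace

/-- Descent inequality for `(L₀, L₁)`-smooth functions. -/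
theorem generalized_smooth_descent {n : ℕ}
    (F : EuclideanSpace ℝ (Fin n) → ℝ)
    (grad : EuclideanSpace ℝ (Fin n) → EuclideanSpace ℝ (Fin n))
    (L0 L1 : ℝ) (hL0 : 0 < L0) (hL1 : 0 ≤ L1)
    (hgrad : ∀ x, HasGradientAt F (grad x) x)
    (hsmooth : ∀ x x', ‖x - x'‖ ≤ 1 / L1 →
      ‖grad x - grad x'‖ ≤ (L0 + L1 * ‖grad x‖) * ‖x - x'‖) :
    ∀ x x', ‖x - x'‖ ≤ 1 / L1 →
      F x' ≤ F x + ⟪grad x, x' - x⟫ + (1 / 2) * (L0 + L1 * ‖grad x‖) * ‖x' - x‖ ^ 2 := by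
  intro x x' hxx'
  set v := x' - x with hv
  set L := L0 + L1 * ‖grad x‖ with hLdef
  have hLnn : 0 ≤ L := by positivity
  set φ : ℝ → ℝ := fun t => F (x + t • v) - t * ⟪grad x, v⟫ - L * t ^ 2 * ‖v‖ ^ 2 / 2 with hφ
  have hderiv : ∀ t : ℝ,
      HasDerivAt φ (⟪grad (x + t • v), v⟫ - ⟪grad x, v⟫ - L * t * ‖v‖ ^ 2) t := by
    intro t
    have h1 : HasDerivAt (fun s : ℝ => x + s • v) v t := by
      simpa using ((hasDerivAt_id t).smul_const v).const_add x
    have h2 : HasDerivAt (fun s : ℝ => F (x + s • v)) ⟪grad (x + t • v), v⟫ t := by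
      have := (hgrad (x + t • v)).hasFDerivAt.comp_hasDerivAt t h1
      simp at this
      exact this
    have h3 : HasDerivAt (fun s : ℝ => s * ⟪grad x, v⟫) ⟪grad x, v⟫ t := by
      simpa using (hasDerivAt_id t).mul_const (⟪grad x, v⟫ : ℝ)
    have h4 : HasDerivAt (fun s : ℝ => L * s ^ 2 * ‖v‖ ^ 2 / 2) (L * t * ‖v‖ ^ 2) t := by
      have hp : HasDerivAt (fun s : ℝ => s ^ 2) (2 * t) t := by
        simpa using hasDerivAt_pow 2 t
      have := ((hp.const_mul L).mul_const (‖v‖ ^ 2)).div_const 2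
      exact this.congr_deriv (show L * (2 * t) * ‖v‖ ^ 2 / 2 = L * t * ‖v‖ ^ 2 by ring)
    exact (h2.sub h3).sub h4
  have hnonpos : ∀ t ∈ Set.Icc (0:ℝ) 1,
      ⟪grad (x + t • v), v⟫ - ⟪grad x, v⟫ - L * t * ‖v‖ ^ 2 ≤ 0 := by
    intro t ht
    have hnorm : ‖x - (x + t • v)‖ = t * ‖v‖ := by
      rw [show x - (x + t • v) = -(t • v) by abel, norm_neg, norm_smul,
        Real.norm_eq_abs, abs_of_nonneg ht.1]
    have hvle : ‖v‖ ≤ 1 / L1 := by rwa [hv, ← norm_sub_rev]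
    have hle : ‖x - (x + t • v)‖ ≤ 1 / L1 := by
      rw [hnorm]
      calc t * ‖v‖ ≤ 1 * ‖v‖ := by
            apply mul_le_mul_of_nonneg_right ht.2 (norm_nonneg v)
        _ = ‖v‖ := one_mul _
        _ ≤ 1 / L1 := hvle
    have hs := hsmooth x (x + t • v) hle
    rw [hnorm] at hs
    have hinner : ⟪grad (x + t • v) - grad x, v⟫ ≤ ‖grad x - grad (x + t • v)‖ * ‖v‖ := by
      calc ⟪grad (x + t • v) - grad x, v⟫ ≤ ‖grad (x + t • v) - grad x‖ * ‖v‖ :=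
            real_inner_le_norm _ _
        _ = ‖grad x - grad (x + t • v)‖ * ‖v‖ := by rw [norm_sub_rev]
    have : ⟪grad (x + t • v), v⟫ - ⟪grad x, v⟫ ≤ L * t * ‖v‖ ^ 2 := by
      rw [← inner_sub_left]
      calc ⟪grad (x + t • v) - grad x, v⟫ ≤ ‖grad x - grad (x + t • v)‖ * ‖v‖ := hinner
        _ ≤ L * (t * ‖v‖) * ‖v‖ := by
            apply mul_le_mul_of_nonneg_right hs (norm_nonneg v)
        _ = L * t * ‖v‖ ^ 2 := by ring
    linarith
  have hA : AntitoneOn φ (Set.Icc (0:ℝ) 1) := by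
    apply antitoneOn_of_deriv_nonpos (convex_Icc 0 1)
    · exact fun t _ => (hderiv t).continuousAt.continuousWithinAt
    · intro t ht
      exact ((hderiv t).differentiableAt).differentiableWithinAt
    · intro t ht
      rw [(hderiv t).deriv]
      exact hnonpos t (Set.mem_of_mem_of_subset ht (interior_subset))
  have h01 : φ 1 ≤ φ 0 := hA (by norm_num) (by norm_num) (by norm_num)
  have h0 : φ 0 = F x := by simp [hφ]
  have h1 : φ 1 = F x' - ⟪grad x, v⟫ - L * ‖v‖ ^ 2 / 2 := by
    simp [hφ, hv]
  rw [h0, h1] at h01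
  have hnv : ‖x' - x‖ = ‖v‖ := by rw [hv]
  rw [hnv]
  linarith
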